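/- arXiv:2012.09072 — 2 statements merged into one kernel-verified Lean document; each statement's English description precedes it below -/
import Mathlib

section
/- For every C₂ > 0 there exists C₃ > 0 and a threshold R ≥ e such that for all real numbers y, z with |y| ≥ R, one has C₂·|y|·|z|·√(|ln|z||) ≤ |z|²/2 + C₃·ln(|y|)·|y|². -/
set_option maxHeartbeats 1000000

open Real

theorem stmt1 (C₂ : ℝ) (hC₂ : 0 < C₂) :
    ∃ C₃ > 0, ∃ R ≥ Real.exp 1, ∀ y z : ℝ, R ≤ |y| →
      C₂ * |y| * |z| * Real.sqrt (|Real.log (abs z)|) ≤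
        |z| ^ 2 / 2 + C₃ * Real.log |y| * |y| ^ 2 := by
  refine ⟨3 * C₂ ^ 2 / 2 + C₂, by positivity, Real.exp 1 + 4 * C₂ ^ 2,
    by nlinarith [sq_nonneg C₂], ?_⟩
  intro y z hy
  obtain ⟨a, ha⟩ : ∃ a, a = |y| := ⟨_, rfl⟩
  obtain ⟨b, hbe⟩ : ∃ b, b = |z| := ⟨_, rfl⟩
  rw [← ha] at hy ⊢
  rw [← hbe]
  have hb0 : 0 ≤ b := hbe ▸ abs_nonneg z
  have hae : Real.exp 1 ≤ a := le_trans (by nlinarith [sq_nonneg C₂]) hy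
  have ha0 : 0 < a := lt_of_lt_of_le (Real.exp_pos 1) hae
  have ha1 : (1:ℝ) ≤ a := le_trans (by nlinarith [Real.add_one_le_exp 1]) hae
  have haC : 4 * C₂ ^ 2 ≤ a := le_trans (by nlinarith [Real.exp_pos 1]) hy
  have hloga : 1 ≤ Real.log a := (Real.le_log_iff_exp_le ha0).mpr hae
  have hloga0 : (0:ℝ) ≤ Real.log a := le_trans zero_le_one hloga
  have hsn : 0 ≤ Real.sqrt |Real.log b| := Real.sqrt_nonneg _
  rcases le_or_gt b 1 with hb1 | hb1
  · -- small case: b ≤ 1, show b * sqrt|log b| ≤ 1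
    have hkey : b * Real.sqrt |Real.log b| ≤ 1 := by
      rcases eq_or_lt_of_le hb0 with h0 | h0
      · simp [← h0]
      · have hlb : Real.log b ≤ 0 := Real.log_nonpos hb0 hb1
        have habs : |Real.log b| = -Real.log b := abs_of_nonpos hlb
        have hinv : -Real.log b ≤ 1 / b := by
          have := Real.log_le_sub_one_of_pos (show (0:ℝ) < 1/b by positivity)
          rw [Real.log_div one_ne_zero (ne_of_gt h0), Real.log_one] at this
          nlinarith
        have htb : |Real.log b| * b ≤ 1 := by
          rw [habs]
          calc (-Real.log b) * b ≤ (1/b) * b := by nlinarith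
            _ = 1 := by field_simp
        have hsq : (Real.sqrt |Real.log b|) ^ 2 = |Real.log b| :=
          Real.sq_sqrt (abs_nonneg _)
        nlinarith [sq_nonneg (b * Real.sqrt |Real.log b| - 1), sq_nonneg (Real.sqrt |Real.log b|)]
    have hstep : C₂ * a * b * Real.sqrt |Real.log b| ≤ C₂ * a := by
      have := mul_le_mul_of_nonneg_left hkey (by positivity : (0:ℝ) ≤ C₂ * a)
      nlinarith
    have h1 : a ≤ a ^ 2 := by nlinarith
    have h2 : a ^ 2 ≤ Real.log a * a ^ 2 := le_mul_of_one_le_left (sq_nonneg a) hloga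
    have h3 : C₂ * a ≤ C₂ * (Real.log a * a ^ 2) :=
      mul_le_mul_of_nonneg_left (by linarith) hC₂.le
    nlinarith [sq_nonneg b, mul_nonneg (mul_nonneg (by positivity : (0:ℝ) ≤ 3 * C₂ ^ 2 / 2) hloga0) (sq_nonneg a)]
  · have hlb0 : 0 ≤ Real.log b := Real.log_nonneg hb1.le
    have habs : |Real.log b| = Real.log b := abs_of_nonneg hlb0
    rcases le_or_gt b (a ^ 3) with hba | hba
    · -- middle case: log b ≤ 3 log a
      have h3 : Real.log b ≤ 3 * Real.log a := by
        have := Real.log_le_log (by positivity) hba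
        rwa [Real.log_pow, Nat.cast_ofNat] at this
      obtain ⟨s, hs⟩ : ∃ s, s = Real.sqrt (3 * Real.log a) := ⟨_, rfl⟩
      have hss : s ^ 2 = 3 * Real.log a := hs ▸ Real.sq_sqrt (by positivity)
      have hle : Real.sqrt |Real.log b| ≤ s := by
        rw [habs, hs]; exact Real.sqrt_le_sqrt h3
      have hstep : C₂ * a * b * Real.sqrt |Real.log b| ≤ C₂ * a * b * s := by
        apply mul_le_mul_of_nonneg_left hle
        positivity
      have hs0 : 0 ≤ s := hs ▸ Real.sqrt_nonneg _
      have hC2s : (C₂ * a) ^ 2 * s ^ 2 = (C₂ * a) ^ 2 * (3 * Real.log a) := by rw [hss]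
      nlinarith [sq_nonneg (b - C₂ * a * s), hC2s,
        mul_nonneg (mul_nonneg hC₂.le hloga0) (sq_nonneg a)]
    · -- large case: b ≥ a^3 ≥ 4C₂²a²
      obtain ⟨s, hs⟩ : ∃ s, s = Real.sqrt b := ⟨_, rfl⟩
      have hss : s ^ 2 = b := hs ▸ Real.sq_sqrt hb0
      have hs0 : 0 ≤ s := hs ▸ Real.sqrt_nonneg _
      have hlogb : Real.log b ≤ b := by
        have := Real.log_le_sub_one_of_pos (lt_trans one_pos hb1)
        linarith
      have hle : Real.sqrt |Real.log b| ≤ s := by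
        rw [habs, hs]; exact Real.sqrt_le_sqrt hlogb
      have hstep : C₂ * a * b * Real.sqrt |Real.log b| ≤ C₂ * a * b * s := by
        apply mul_le_mul_of_nonneg_left hle
        positivity
      have h2 : 2 * C₂ * a ≤ s := by
        have h4 : (2 * C₂ * a) ^ 2 ≤ b := by nlinarith [sq_nonneg a]
        have := Real.sqrt_le_sqrt h4
        rw [hs]; rwa [Real.sqrt_sq (by positivity)] at this
      have hbss : b * s ^ 2 = b * b := by rw [hss]
      have hkey2 : 0 ≤ b * s * (s - 2 * C₂ * a) :=
        mul_nonneg (mul_nonneg hb0 hs0) (by linarith)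
      have h5 : C₂ * a * b * s ≤ b ^ 2 / 2 := by nlinarith [hkey2, hbss]
      have h6 : (0:ℝ) ≤ (3 * C₂ ^ 2 / 2 + C₂) * Real.log a * a ^ 2 := by positivity
      linarith [hstep]
end

section
/- Let β ≥ 2. For all real numbers y and v, |y + v|^β - |y|^β - β·|y|^{β-2}·y·v ≥ β(β-1)·3^{1-β}·|y|^{β-2}·v², where |y|^{β-2}·y is interpreted as 0 when y = 0. -/
open Real

private lemma three_mul_le (x : ℝ) (hx : 1 ≤ x) : 3 * x ≤ (3:ℝ) ^ x := by
  have hlog : (1:ℝ) ≤ Real.log 3 := by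
    rw [Real.le_log_iff_exp_le (by norm_num)]
    calc Real.exp 1 ≤ 2.7182818286 := Real.exp_one_lt_d9.le
    _ ≤ 3 := by norm_num
  have h1 : (x:ℝ) ≤ (3:ℝ) ^ (x - 1) := by
    rw [Real.rpow_def_of_pos (by norm_num : (0:ℝ) < 3)]
    calc x = (x - 1) + 1 := by ring
    _ ≤ (x - 1) * Real.log 3 + 1 := by nlinarith
    _ ≤ Real.exp ((x - 1) * Real.log 3) := Real.add_one_le_exp _
    _ = Real.exp (Real.log 3 * (x - 1)) := by ring_nf
  have h2 : (3:ℝ) ^ x = 3 * (3:ℝ) ^ (x - 1) := by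
    calc (3:ℝ) ^ x = (3:ℝ) ^ ((1:ℝ) + (x - 1)) := by ring_nf
    _ = (3:ℝ) ^ (1:ℝ) * (3:ℝ) ^ (x - 1) := Real.rpow_add (by norm_num) 1 (x - 1)
    _ = 3 * (3:ℝ) ^ (x - 1) := by rw [Real.rpow_one]
  rw [h2]
  nlinarith

private lemma sq_add_le (x : ℝ) (hx : 1 ≤ x) : x ^ 2 + x ≤ (3:ℝ) ^ x := by
  rcases le_total x 2 with h | h
  · calc x ^ 2 + x ≤ 3 * x := by nlinarith
    _ ≤ (3:ℝ) ^ x := three_mul_le x hx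
  · have hx2 : 1 ≤ x / 2 := by linarith
    have h1 : 3 * (x / 2) ≤ (3:ℝ) ^ (x / 2) := three_mul_le _ hx2
    have h2 : (3:ℝ) ^ x = (3:ℝ) ^ (x/2) * (3:ℝ) ^ (x/2) := by
      rw [← Real.rpow_add (by norm_num : (0:ℝ) < 3)]; ring_nf
    rw [h2]
    nlinarith

private lemma core (β : ℝ) (hβ : 2 ≤ β) (t : ℝ) :
    1 + β * t + β * (β - 1) * (3:ℝ) ^ (1 - β) * t ^ 2 ≤ |1 + t| ^ β := by
  set c := β * (β - 1) * (3:ℝ) ^ (1 - β) with hc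
  set P := (3:ℝ) ^ (β - 1) with hPdef
  have hP : 0 < P := Real.rpow_pos_of_pos (by norm_num) _
  have hcP : c * P = β * (β - 1) := by
    rw [hc, hPdef, mul_assoc, ← Real.rpow_add (by norm_num : (0:ℝ) < 3)]
    norm_num
  have hP2 : 3 * (β - 1) ≤ P := three_mul_le _ (by linarith)
  have hPb : β * (β - 1) ≤ P := by
    have := sq_add_le (β - 1) (by linarith)
    rw [hPdef]; nlinarith
  have hb1 : (0:ℝ) ≤ β - 1 := by linarith
  have hc0 : 0 ≤ c := by rw [hc]; positivity
  have hc1 : c ≤ 1 := by nlinarith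
  have hc2 : 4 * c ≤ β ^ 2 := by nlinarith
  have hc3 : c ≤ β - 1 := by nlinarith
  have hc4 : 4 * c ≤ 2 * β - 1 := by nlinarith
  rcases le_or_gt (-1) t with ht | ht
  · -- t ≥ -1
    rw [abs_of_nonneg (by linarith : (0:ℝ) ≤ 1 + t)]
    rcases le_or_gt 0 (1 + (β/2) * t) with hb | hb
    · have hbern : 1 + (β/2) * t ≤ (1 + t) ^ (β/2) :=
        one_add_mul_self_le_rpow_one_add ht (by linarith)
      have hsq : (1 + (β/2) * t) ^ 2 ≤ ((1 + t) ^ (β/2)) ^ 2 :=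
        pow_le_pow_left₀ hb hbern 2
      have heq : ((1 + t) ^ (β/2)) ^ 2 = (1 + t) ^ β := by
        rw [← Real.rpow_natCast ((1+t) ^ (β/2)) 2,
          ← Real.rpow_mul (by linarith : (0:ℝ) ≤ 1 + t)]
        norm_num
      rw [← heq]
      nlinarith [sq_nonneg t]
    · have ht0 : t < 0 := by nlinarith
      have hbt : β * t < -2 := by nlinarith
      have ht2 : t ^ 2 ≤ 1 := by nlinarith
      have := Real.rpow_nonneg (by linarith : (0:ℝ) ≤ 1 + t) β
      nlinarith
  · -- t < -1
    have habs : |1 + t| = -t - 1 := by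
      rw [abs_of_nonpos (by linarith : 1 + t ≤ 0)]; ring
    rw [habs]
    have hrn : (0:ℝ) ≤ (-t - 1) ^ β := Real.rpow_nonneg (by linarith) β
    rcases le_or_gt (-2) t with h2 | h2
    · -- -2 ≤ t < -1 : show 1 + β t + c t² ≤ 0
      have : 1 + β * t + c * t ^ 2 ≤ 0 := by
        nlinarith [mul_nonneg (mul_nonneg hc0 (by linarith : (0:ℝ) ≤ -t - 1))
          (by linarith : (0:ℝ) ≤ 2 + t)]
      linarith
    · -- t < -2 : (-t-1)^β ≥ (-t-1)^2
      have hb1' : (1:ℝ) ≤ -t - 1 := by linarith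
      have hle : (-t - 1) ^ (2:ℝ) ≤ (-t - 1) ^ β :=
        Real.rpow_le_rpow_of_exponent_le hb1' (by linarith)
      have heq2 : (-t - 1) ^ (2:ℝ) = (-t - 1) ^ 2 := by
        rw [show (2:ℝ) = ((2:ℕ):ℝ) by norm_num, Real.rpow_natCast]
      rw [heq2] at hle
      nlinarith

theorem stmt4 (β : ℝ) (hβ : 2 ≤ β) (y v : ℝ) :
    β * (β - 1) * (3 : ℝ) ^ (1 - β) * |y| ^ (β - 2) * v ^ 2 ≤
      |y + v| ^ β - |y| ^ β - β * ((if y = 0 then 0 else |y| ^ (β - 2) * y) * v) := by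
  by_cases hy : y = 0
  · subst hy
    rw [if_pos rfl]
    simp only [abs_zero, zero_add, zero_mul, mul_zero, sub_zero]
    rw [Real.zero_rpow (by positivity : β ≠ 0)]
    rcases eq_or_lt_of_le hβ with h2 | h2
    · -- β = 2
      subst h2
      rw [show (2:ℝ) - 2 = 0 by ring, Real.rpow_zero]
      have hv : |v| ^ (2:ℝ) = v ^ 2 := by
        rw [show (2:ℝ) = ((2:ℕ):ℝ) by norm_num, Real.rpow_natCast, sq_abs]
      rw [hv]
      have h3 : (3:ℝ) ^ ((1:ℝ) - 2) = 1/3 := by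
        rw [show (1:ℝ) - 2 = -1 by norm_num, Real.rpow_neg_one]
        norm_num
      rw [h3]
      nlinarith [sq_nonneg v]
    · rw [Real.zero_rpow (by intro h; linarith [sub_eq_zero.mp h] : β - 2 ≠ 0)]
      simpa using Real.rpow_nonneg (abs_nonneg v) β
  · rw [if_neg hy]
    have hay : 0 < |y| := abs_pos.mpr hy
    have hcore := core β hβ (v / y)
    have h2r : |y| ^ (2:ℝ) = y ^ 2 := by
      rw [show (2:ℝ) = ((2:ℕ):ℝ) by norm_num, Real.rpow_natCast, sq_abs]
    have hyB : |y| ^ β = |y| ^ (β - 2) * y ^ 2 := by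
      rw [← h2r, ← Real.rpow_add hay]
      norm_num
    have hsum : |y + v| ^ β = |y| ^ (β - 2) * y ^ 2 * |1 + v / y| ^ β := by
      rw [← hyB, ← Real.mul_rpow (abs_nonneg y) (abs_nonneg _), ← abs_mul]
      congr 2
      field_simp
    have h1 : |y| ^ (β-2) * y ^ 2 *
          (1 + β * (v/y) + β * (β - 1) * (3:ℝ)^(1-β) * (v/y) ^ 2)
        ≤ |y| ^ (β-2) * y ^ 2 * |1 + v/y| ^ β :=
      mul_le_mul_of_nonneg_left hcore (by positivity)
    have e1 : |y| ^ (β-2) * y ^ 2 *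
          (1 + β * (v/y) + β * (β - 1) * (3:ℝ)^(1-β) * (v/y) ^ 2)
        = |y| ^ β + β * (|y| ^ (β-2) * y * v)
          + β * (β - 1) * (3:ℝ)^(1-β) * |y|^(β-2) * v ^ 2 := by
      rw [hyB]; field_simp
    rw [hsum]
    linarith
end
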